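/- Let k : ℝ^d × ℝ^d → ℝ be a continuous, bounded, symmetric, integrally strictly positive definite (ISPD) kernel, let X have law with density p with respect to Lebesgue measure, let ψ be square-integrable with h(x) := E[ψ | X=x]·p(x) in L²(ℝ^d), and let (ψ', X') be an independent copy of (ψ, X) with E[|ψ k(X,X') ψ'|] < ∞. Then E[ψ k(X, X') ψ'] = 0 if and only if E[ψ | X = x] = 0 for P_X-almost every x. (Equivalently, the maximum moment restriction 𝔐² vanishes exactly when the conditional moment restriction E[ψ | X] = 0 holds.) -/

import Mathlib

open MeasureTheory

/-- For a continuous, bounded, symmetric, integrally strictly positive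
definite (ISPD) kernel `k` and a random vector `X` with density `p` w.r.t. Lebesgue
measure, the maximum moment restriction `E[ψ k(X,X') ψ'] = 0` (with `(ψ', X')` an
independent copy of `(ψ, X)`) holds if and only if the conditional moment restriction
`E[ψ | X = x] = 0` holds for `P_X`-almost every `x`. -/
theorem mmr_zero_iff_cmr
    {Ω : Type*} [MeasurableSpace Ω] (P : Measure Ω) [IsProbabilityMeasure P]
    {d : ℕ} (X : Ω → (Fin d → ℝ)) (hX : Measurable X)
    (p : (Fin d → ℝ) → ℝ) (hpm : Measurable p) (hp0 : ∀ x, 0 ≤ p x)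
    (hlaw : P.map X = volume.withDensity (fun x => ENNReal.ofReal (p x)))
    (k : (Fin d → ℝ) → (Fin d → ℝ) → ℝ)
    (hkCont : Continuous (fun q : (Fin d → ℝ) × (Fin d → ℝ) => k q.1 q.2))
    (hkBdd : ∃ C : ℝ, ∀ x y, |k x y| ≤ C)
    (hkSymm : ∀ x y, k x y = k y x)
    (hISPD : ∀ f : (Fin d → ℝ) → ℝ, Measurable f → MemLp f 2 volume →
      0 < ∫ x, (f x) ^ 2 ∂volume →
      0 < ∫ x, ∫ x', f x * k x x' * f x' ∂volume ∂volume)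
    (ψ : Ω → ℝ) (hψ : MemLp ψ 2 P)
    -- a fixed version `g` of the conditional expectation `E[ψ | X = ·]`:
    (g : (Fin d → ℝ) → ℝ) (hg : Measurable g)
    (hgVersion : ∀ᵐ ω ∂P, (P[ψ | MeasurableSpace.comap X inferInstance]) ω = g (X ω))
    -- `h(x) = E[ψ | X=x]·p(x)` is in `L²(ℝ^d)`:
    (hhL2 : MemLp (fun x => g x * p x) 2 volume)
    -- `E[|ψ k(X,X') ψ'|] < ∞` on the product space:
    (hInt : Integrable (fun ω : Ω × Ω => ψ ω.1 * k (X ω.1) (X ω.2) * ψ ω.2) (P.prod P)) :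
    (∫ ω : Ω × Ω, ψ ω.1 * k (X ω.1) (X ω.2) * ψ ω.2 ∂(P.prod P)) = 0 ↔
      ∀ᵐ x ∂(P.map X), g x = 0 := by
  classical
  obtain ⟨C, hC⟩ := hkBdd
  have hC0 : 0 ≤ C := le_trans (abs_nonneg _) (hC (fun _ => 0) (fun _ => 0))
  set h : (Fin d → ℝ) → ℝ := fun x => g x * p x with hh_def
  have hhm : Measurable h := hg.mul hpm
  have hm : MeasurableSpace.comap X inferInstance ≤ ‹MeasurableSpace Ω› :=
    measurable_iff_comap_le.mp hX
  haveI : SigmaFinite (P.trim hm) := inferInstance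
  have hψ1 : Integrable ψ P := hψ.integrable one_le_two
  -- g ∘ X is integrable (it is a.e. the conditional expectation)
  have hgX_int : Integrable (fun ω => g (X ω)) P :=
    (integrable_condExp (f := ψ) (m := MeasurableSpace.comap X inferInstance)).congr hgVersion
  -- h = g·p is integrable w.r.t. Lebesgue measure
  have hg_map_int : Integrable g (P.map X) :=
    (integrable_map_measure hg.aestronglyMeasurable hX.aemeasurable).mpr hgX_int
  have hofReal_meas : Measurable fun x => ENNReal.ofReal (p x) := hpm.ennreal_ofReal
  have hh_int : Integrable h volume := by
    have hiff := integrable_withDensity_iff (μ := (volume : Measure (Fin d → ℝ)))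
      hofReal_meas (ae_of_all _ fun x => ENNReal.ofReal_lt_top) (g := g)
    have h1 : Integrable (fun x => g x * (ENNReal.ofReal (p x)).toReal) volume :=
      hiff.mp (hlaw ▸ hg_map_int)
    refine h1.congr (ae_of_all _ fun x => ?_)
    simp [hh_def, ENNReal.toReal_ofReal (hp0 x)]
  -- key identity: for bounded measurable φ,  E[ψ φ(X)] = ∫ h·φ
  have key : ∀ φ : (Fin d → ℝ) → ℝ, Measurable φ → (∀ x, |φ x| ≤ C * (1 + ∫ y, |h y|)) →
      ∫ ω, ψ ω * φ (X ω) ∂P = ∫ x, h x * φ x := by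
    intro φ hφ hφbdd
    have hφX_sm : StronglyMeasurable[MeasurableSpace.comap X inferInstance] (fun ω => φ (X ω)) :=
      (hφ.comp (measurable_iff_comap_le.mpr le_rfl)).stronglyMeasurable
    have hmul_int : Integrable ((fun ω => φ (X ω)) * ψ) P := by
      refine hψ1.bdd_mul (c := C * (1 + ∫ y, |h y|)) ((hφ.comp hX).aestronglyMeasurable) (ae_of_all _ fun ω => ?_)
      simpa [Real.norm_eq_abs] using hφbdd (X ω)
    have h2 := condExp_mul_of_stronglyMeasurable_left (μ := P) hφX_sm hmul_int hψ1
    have step1 : ∫ ω, ψ ω * φ (X ω) ∂P = ∫ ω, g (X ω) * φ (X ω) ∂P := by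
      calc ∫ ω, ψ ω * φ (X ω) ∂P = ∫ ω, ((fun ω => φ (X ω)) * ψ) ω ∂P := by
            simp [mul_comm]
        _ = ∫ ω, (P[(fun ω => φ (X ω)) * ψ | MeasurableSpace.comap X inferInstance]) ω ∂P :=
              (integral_condExp hm).symm
        _ = ∫ ω, g (X ω) * φ (X ω) ∂P := by
            refine integral_congr_ae ?_
            filter_upwards [h2, hgVersion] with ω hω hωg
            simp only [hω, Pi.mul_apply, hωg]; ring
    rw [step1]
    have hmap : ∫ x, g x * φ x ∂(P.map X) = ∫ ω, g (X ω) * φ (X ω) ∂P :=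
      integral_map hX.aemeasurable ((hg.mul hφ).aestronglyMeasurable)
    rw [← hmap, hlaw]
    have hnn : Measurable fun x => (p x).toNNReal := hpm.real_toNNReal
    have hwd : (fun x => ENNReal.ofReal (p x)) = fun x => ((p x).toNNReal : ENNReal) := rfl
    rw [hwd, integral_withDensity_eq_integral_smul hnn (fun x => g x * φ x)]
    refine integral_congr_ae (ae_of_all _ fun x => ?_)
    simp [NNReal.smul_def, Real.coe_toNNReal _ (hp0 x), hh_def]; ring
  -- the function F x = ∫ y, h y * k x y
  set F : (Fin d → ℝ) → ℝ := fun x => ∫ y, h y * k x y with hF_def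
  have hF_sm : StronglyMeasurable F := by
    have : StronglyMeasurable (fun q : (Fin d → ℝ) × (Fin d → ℝ) => h q.2 * k q.1 q.2) :=
      ((hhm.comp measurable_snd).stronglyMeasurable).mul hkCont.stronglyMeasurable
    exact this.integral_prod_right'
  have hFbdd : ∀ x, |F x| ≤ C * (1 + ∫ y, |h y|) := by
    intro x
    have h1 : |F x| ≤ ∫ y, |h y| * |k x y| := by
      simpa [Real.norm_eq_abs, abs_mul] using
        norm_integral_le_integral_norm (fun y => h y * k x y)
    have h2 : ∫ y, |h y| * |k x y| ≤ ∫ y, C * |h y| := by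
      refine integral_mono_of_nonneg (ae_of_all _ fun y => mul_nonneg (abs_nonneg _) (abs_nonneg _))
        (hh_int.abs.const_mul C) (ae_of_all _ fun y => ?_)
      exact le_trans (le_of_eq (mul_comm _ _))
        (mul_le_mul_of_nonneg_right (hC x y) (abs_nonneg _))
    have h3 : ∫ y, C * |h y| = C * ∫ y, |h y| := integral_const_mul C _
    have h4 : C * ∫ y, |h y| ≤ C * (1 + ∫ y, |h y|) := by
      refine mul_le_mul_of_nonneg_left ?_ hC0
      linarith
    linarith [h1, h2.trans_eq h3]
  -- main identity
  have main : (∫ ω : Ω × Ω, ψ ω.1 * k (X ω.1) (X ω.2) * ψ ω.2 ∂(P.prod P))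
      = ∫ x, ∫ x', h x * k x x' * h x' := by
    rw [integral_prod _ hInt]
    have inner : ∀ ω1 : Ω, ∫ ω2, ψ ω1 * k (X ω1) (X ω2) * ψ ω2 ∂P = ψ ω1 * F (X ω1) := by
      intro ω1
      have e1 : ∫ ω2, ψ ω1 * k (X ω1) (X ω2) * ψ ω2 ∂P
          = ∫ ω2, ψ ω1 * (ψ ω2 * k (X ω1) (X ω2)) ∂P :=
        integral_congr_ae (ae_of_all _ fun ω2 => by ring)
      rw [e1, integral_const_mul]
      congr 1
      have hφ : Measurable fun y => k (X ω1) y :=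
        (hkCont.comp (continuous_const.prodMk continuous_id)).measurable
      have ht : (0:ℝ) ≤ ∫ y, |h y| := integral_nonneg fun y => abs_nonneg _
      have := key (fun y => k (X ω1) y) hφ (fun y => by
        refine le_trans (hC _ _) ?_
        nlinarith [mul_nonneg hC0 ht])
      simpa [hF_def] using this
    calc ∫ ω1, ∫ ω2, ψ ω1 * k (X ω1) (X ω2) * ψ ω2 ∂P ∂P
        = ∫ ω1, ψ ω1 * F (X ω1) ∂P := integral_congr_ae (ae_of_all _ inner)
      _ = ∫ x, h x * F x := key F hF_sm.measurable hFbdd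
      _ = ∫ x, ∫ x', h x * k x x' * h x' := by
          refine integral_congr_ae (ae_of_all _ fun x => ?_)
          show h x * (∫ y, h y * k x y) = ∫ x', h x * k x x' * h x'
          rw [← integral_const_mul]
          exact integral_congr_ae (ae_of_all _ fun y => by ring)
  rw [main]
  constructor
  · intro h0
    have hsq : ∫ x, (h x) ^ 2 = 0 := by
      by_contra hne
      have hpos : 0 < ∫ x, h x ^ 2 :=
        lt_of_le_of_ne (integral_nonneg fun x => sq_nonneg _) (Ne.symm hne)
      exact absurd h0 (ne_of_gt (hISPD h hhm hhL2 hpos))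
    have hh0 : ∀ᵐ x ∂(volume : Measure (Fin d → ℝ)), h x = 0 := by
      have hint2 : Integrable (fun x => h x ^ 2) volume := hhL2.integrable_sq
      have := (integral_eq_zero_iff_of_nonneg (fun x => sq_nonneg (h x)) hint2).mp hsq
      filter_upwards [this] with x hx
      exact (pow_eq_zero_iff (two_ne_zero)).mp hx
    rw [hlaw, ae_withDensity_iff hofReal_meas]
    filter_upwards [hh0] with x hx hpx
    have hpne : p x ≠ 0 := by
      intro hzero
      exact hpx (by simp [hzero])
    exact (mul_eq_zero.mp hx).resolve_right hpne
  · intro hg0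
    have hh0 : ∀ᵐ x ∂(volume : Measure (Fin d → ℝ)), h x = 0 := by
      rw [hlaw, ae_withDensity_iff hofReal_meas] at hg0
      filter_upwards [hg0] with x hx
      by_cases hp : p x = 0
      · simp [hh_def, hp]
      · have : ENNReal.ofReal (p x) ≠ 0 := by
          simp [ENNReal.ofReal_eq_zero, not_le, lt_of_le_of_ne (hp0 x) (Ne.symm hp)]
        simp [hh_def, hx this]
    refine integral_eq_zero_of_ae ?_
    filter_upwards [hh0] with x hx
    simp [hx]
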